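/- arXiv:2301.09587 — 3 statements merged into one kernel-verified Lean document; each statement's English description precedes it below -/
import Mathlib

section
/- Let n be a non-negative integer and let s be a complex number such that s is not equal to any of −1, −2, …, −n. Then ∑_{k=0}^{n} C(s+k, k) · C(2n−2k, n−k) · 4^k = C(2n,n) · C(2n+2s+1, 2n) / C(n+s, n), where C(2n,n) and C(2n−2k,n−k) are ordinary binomial coefficients. -/
open Finset

/-- Generalized binomial coefficient `C(z,k) = z(z-1)⋯(z-k+1)/k!`. -/
noncomputable def cchoose (z : ℂ) (k : ℕ) : ℂ :=
  (∏ i ∈ Finset.range k, (z - i)) / (k.factorial : ℂ)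

lemma cchoose_zero (z : ℂ) : cchoose z 0 = 1 := by simp [cchoose]

lemma cchoose_succ (z : ℂ) (k : ℕ) :
    ((k : ℂ) + 1) * cchoose (z + 1) (k + 1) = (z + 1) * cchoose z k := by
  have hk : ((k : ℂ) + 1) ≠ 0 := by
    have : ((k:ℂ)+1) = ((k+1 : ℕ) : ℂ) := by push_cast; ring
    rw [this]; exact Nat.cast_ne_zero.mpr (Nat.succ_ne_zero k)
  have hf : ((k.factorial : ℂ)) ≠ 0 := Nat.cast_ne_zero.mpr (Nat.factorial_ne_zero k)
  have hp : ∏ i ∈ Finset.range (k+1), (z + 1 - i)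
      = (z + 1) * ∏ i ∈ Finset.range k, (z - i) := by
    rw [Finset.prod_range_succ']
    have : ∀ i ∈ Finset.range k, (z + 1 - ((i : ℕ) + 1 : ℕ)) = z - i := by
      intro i _; push_cast; ring
    rw [Finset.prod_congr rfl this]
    push_cast; ring
  unfold cchoose
  rw [hp, Nat.factorial_succ]
  push_cast
  field_simp

lemma cchoose_ne_zero (n : ℕ) (s : ℂ)
    (hs : ∀ i : ℕ, 1 ≤ i → i ≤ n → s ≠ -(i : ℂ)) :
    cchoose ((n : ℂ) + s) n ≠ 0 := by
  unfold cchoose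
  apply div_ne_zero
  · rw [Finset.prod_ne_zero_iff]
    intro i hi
    rw [Finset.mem_range] at hi
    have h := hs (n - i) (by omega) (by omega)
    intro h0
    apply h
    have hcast : ((n - i : ℕ) : ℂ) = (n : ℂ) - (i : ℂ) := by
      push_cast [Nat.cast_sub hi.le]; ring
    rw [hcast]
    linear_combination h0
  · exact Nat.cast_ne_zero.mpr (Nat.factorial_ne_zero n)

-- Nat binomial identities
lemma nat1 (m : ℕ) : (m+2) * ((2*m+4).choose (m+2)) = 2*(2*m+3) * ((2*m+2).choose (m+1)) := by
  have := Nat.succ_mul_centralBinom_succ (m+1)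
  simp only [Nat.centralBinom] at this
  rw [show m+1+1 = m+2 by omega, show 2*(m+1)+1 = 2*m+3 by omega,
    show 2*(m+2) = 2*m+4 by omega, show 2*(m+1) = 2*m+2 by omega] at this
  exact this

lemma nat2 (m : ℕ) : (2*m+2).choose (m+1) = 2 * ((2*m+1).choose m) := by
  have hp : (2*m+2).choose (m+1) = (2*m+1).choose m + (2*m+1).choose (m+1) := by
    have := Nat.choose_succ_succ (2*m+1) m
    simpa using this
  have hsym := Nat.choose_symm (show m ≤ 2*m+1 by omega)
  rw [show 2*m+1-m = m+1 by omega] at hsym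
  omega

lemma nat3 (m : ℕ) : (m+2) * ((2*m+3).choose (m+1)) = (2*m+3) * ((2*m+2).choose (m+1)) := by
  have := Nat.add_one_mul_choose_eq (2*m+2) (m+1)
  have hsym := Nat.choose_symm (show m+1 ≤ 2*m+3 by omega)
  rw [show 2*m+3-(m+1) = m+2 by omega] at hsym
  rw [show 2*m+2+1 = 2*m+3 by omega, show m+1+1 = m+2 by omega, hsym] at this
  calc (m+2) * ((2*m+3).choose (m+1)) = (2*m+3).choose (m+1) * (m+2) := by ring
    _ = (2*m+3) * ((2*m+2).choose (m+1)) := this.symm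

/-- Certificate function for the telescoping. -/
noncomputable def gcert (s : ℂ) (n k : ℕ) : ℂ :=
  -2 * k * cchoose (s + k) k * (((2*n - 2*k + 1).choose (n - k)) : ℂ) * 4 ^ k

lemma perk (s : ℂ) (n k : ℕ) (hk : k < n) :
    ((n : ℂ) + 1) * (cchoose (s + k) k * (((2*(n+1) - 2*k).choose (n+1-k)) : ℂ) * 4 ^ k)
      - 2*(2*s + 2*n + 3) * (cchoose (s + k) k * (((2*n - 2*k).choose (n-k)) : ℂ) * 4 ^ k)
      = gcert s n (k+1) - gcert s n k := by
  obtain ⟨m, rfl⟩ : ∃ m, n = k + m + 1 := ⟨n - k - 1, by omega⟩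
  unfold gcert
  rw [show 2*(k+m+1+1) - 2*k = 2*m+4 by omega, show k+m+1+1-k = m+2 by omega,
      show 2*(k+m+1) - 2*k = 2*m+2 by omega, show k+m+1-k = m+1 by omega,
      show 2*(k+m+1) - 2*(k+1) + 1 = 2*m+1 by omega, show k+m+1-(k+1) = m by omega]
  have hm2 : ((m : ℂ) + 2) ≠ 0 := by
    have : ((m:ℂ)+2) = ((m+2 : ℕ) : ℂ) := by push_cast; ring
    rw [this]; exact Nat.cast_ne_zero.mpr (by omega)
  have hk1 : ((k : ℂ) + 1) ≠ 0 := by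
    have : ((k:ℂ)+1) = ((k+1 : ℕ) : ℂ) := by push_cast; ring
    rw [this]; exact Nat.cast_ne_zero.mpr (by omega)
  -- cast relations
  have c1 : ((m:ℂ)+2) * (((2*m+4).choose (m+2)) : ℂ) = 2*(2*(m:ℂ)+3) * (((2*m+2).choose (m+1)) : ℂ) := by
    exact_mod_cast congrArg (Nat.cast : ℕ → ℂ) (nat1 m)
  have c2 : (((2*m+2).choose (m+1)) : ℂ) = 2 * (((2*m+1).choose m) : ℂ) := by
    exact_mod_cast congrArg (Nat.cast : ℕ → ℂ) (nat2 m)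
  have c3 : ((m:ℂ)+2) * (((2*m+3).choose (m+1)) : ℂ) = (2*(m:ℂ)+3) * (((2*m+2).choose (m+1)) : ℂ) := by
    exact_mod_cast congrArg (Nat.cast : ℕ → ℂ) (nat3 m)
  have c4 : ((k:ℂ)+1) * cchoose (s + ((k:ℕ)+1 : ℕ)) (k+1) = (s + k + 1) * cchoose (s + k) k := by
    have h := cchoose_succ (s + k) k
    have : cchoose (s + ((k:ℕ)+1 : ℕ)) (k+1) = cchoose (s + (k:ℂ) + 1) (k+1) := by
      congr 1; push_cast; ring
    rw [this]; rw [h]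
  -- express via division and finish
  have e1 : (((2*m+4).choose (m+2)) : ℂ) = 2*(2*(m:ℂ)+3) * (((2*m+2).choose (m+1)) : ℂ) / ((m:ℂ)+2) := by
    rw [eq_div_iff hm2]; linear_combination c1
  have e3 : (((2*m+3).choose (m+1)) : ℂ) = (2*(m:ℂ)+3) * (((2*m+2).choose (m+1)) : ℂ) / ((m:ℂ)+2) := by
    rw [eq_div_iff hm2]; linear_combination c3
  have e4 : cchoose (s + ((k:ℕ)+1 : ℕ)) (k+1) = (s + k + 1) * cchoose (s + k) k / ((k:ℂ)+1) := by
    rw [eq_div_iff hk1]; linear_combination c4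
  rw [e1, e3, e4, c2]
  push_cast
  field_simp
  ring

lemma sum_rec (s : ℂ) (n : ℕ) :
    ((n : ℂ) + 1) *
        (∑ k ∈ range (n+1+1),
          cchoose (s + k) k * (((2*(n+1) - 2*k).choose (n+1-k)) : ℂ) * 4 ^ k)
      = 2*(2*s + 2*n + 3) *
        (∑ k ∈ range (n+1),
          cchoose (s + k) k * (((2*n - 2*k).choose (n-k)) : ℂ) * 4 ^ k) := by
  rw [Finset.sum_range_succ (n := n+1), Finset.sum_range_succ (n := n),
      Finset.sum_range_succ (n := n)]
  -- telescoping over range n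
  have tel : ((n : ℂ) + 1) *
        (∑ k ∈ range n, cchoose (s + k) k * (((2*(n+1) - 2*k).choose (n+1-k)) : ℂ) * 4 ^ k)
      - 2*(2*s + 2*n + 3) *
        (∑ k ∈ range n, cchoose (s + k) k * (((2*n - 2*k).choose (n-k)) : ℂ) * 4 ^ k)
      = gcert s n n - gcert s n 0 := by
    rw [Finset.mul_sum, Finset.mul_sum, ← Finset.sum_sub_distrib]
    rw [← Finset.sum_range_sub (gcert s n) n]
    apply Finset.sum_congr rfl
    intro k hk
    exact perk s n k (Finset.mem_range.mp hk)
  have hg0 : gcert s n 0 = 0 := by simp [gcert]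
  have hgn : gcert s n n = -2*(n:ℂ) * cchoose (s + n) n * 4 ^ n := by
    unfold gcert
    rw [show 2*n - 2*n + 1 = 1 by omega, Nat.sub_self]
    norm_num
  -- boundary values
  have hfn' : (((2*(n+1) - 2*n).choose (n+1-n)) : ℂ) = 2 := by
    rw [show 2*(n+1) - 2*n = 2 by omega, show n+1-n = 1 by omega]
    norm_num
  have hfn : (((2*n - 2*n).choose (n-n)) : ℂ) = 1 := by
    rw [Nat.sub_self, Nat.sub_self]; norm_num
  have hlast : (((2*(n+1) - 2*(n+1)).choose (n+1-(n+1))) : ℂ) = 1 := by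
    rw [Nat.sub_self, Nat.sub_self]; norm_num
  have c4 : ((n:ℂ)+1) * cchoose (s + ((n:ℕ)+1 : ℕ)) (n+1) = (s + n + 1) * cchoose (s + n) n := by
    have h := cchoose_succ (s + n) n
    have heq : cchoose (s + ((n:ℕ)+1 : ℕ)) (n+1) = cchoose (s + (n:ℂ) + 1) (n+1) := by
      congr 1; push_cast; ring
    rw [heq, h]
  rw [hfn', hfn, hlast]
  push_cast at *
  linear_combination tel - hg0 + hgn + 4^n * 4 * c4

lemma prod_identity (s : ℂ) (n : ℕ) :
    (∑ k ∈ range (n + 1), cchoose (s + k) k * ((2 * n - 2 * k).choose (n - k) : ℂ) * 4 ^ k)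
        * cchoose ((n : ℂ) + s) n
      = ((2 * n).choose n : ℂ) * cchoose (2 * n + 2 * s + 1) (2 * n) := by
  induction n with
  | zero => simp [cchoose]
  | succ n IH =>
    have hn1 : ((n : ℂ) + 1) ≠ 0 := by
      have : ((n:ℂ)+1) = ((n+1 : ℕ) : ℂ) := by push_cast; ring
      rw [this]; exact Nat.cast_ne_zero.mpr (by omega)
    have h2n1 : (2*(n : ℂ) + 1) ≠ 0 := by
      have : (2*(n:ℂ)+1) = ((2*n+1 : ℕ) : ℂ) := by push_cast; ring
      rw [this]; exact Nat.cast_ne_zero.mpr (by omega)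
    have h2n2 : (2*(n : ℂ) + 2) ≠ 0 := by
      have : (2*(n:ℂ)+2) = ((2*n+2 : ℕ) : ℂ) := by push_cast; ring
      rw [this]; exact Nat.cast_ne_zero.mpr (by omega)
    have r1 := sum_rec s n
    have r2 : ((n : ℂ) + 1) * cchoose (((n+1 : ℕ) : ℂ) + s) (n+1)
        = ((n : ℂ) + s + 1) * cchoose ((n : ℂ) + s) n := by
      have h := cchoose_succ ((n : ℂ) + s) n
      have heq : cchoose (((n+1 : ℕ) : ℂ) + s) (n+1) = cchoose (((n : ℂ) + s) + 1) (n+1) := by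
        congr 1; push_cast; ring
      rw [heq]; linear_combination h
    have r3 : (2*(n : ℂ) + 1) * cchoose (2*(n:ℂ) + 2*s + 2) (2*n+1)
        = (2*(n:ℂ) + 2*s + 2) * cchoose (2*(n:ℂ) + 2*s + 1) (2*n) := by
      have h := cchoose_succ (2*(n:ℂ) + 2*s + 1) (2*n)
      push_cast at h
      have heq : cchoose (2*(n:ℂ) + 2*s + 2) (2*n+1)
          = cchoose ((2*(n:ℂ) + 2*s + 1) + 1) (2*n+1) := by
        congr 1; ring
      rw [heq]
      linear_combination h
    have r4 : (2*(n : ℂ) + 2) * cchoose (2*((n+1:ℕ) : ℂ) + 2*s + 1) (2*(n+1))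
        = (2*(n:ℂ) + 2*s + 3) * cchoose (2*(n:ℂ) + 2*s + 2) (2*n+1) := by
      have h := cchoose_succ (2*(n:ℂ) + 2*s + 2) (2*n+1)
      push_cast at h
      have heq : cchoose (2*((n+1:ℕ) : ℂ) + 2*s + 1) (2*(n+1))
          = cchoose ((2*(n:ℂ) + 2*s + 2) + 1) (2*n+1+1) := by
        rw [show 2*(n+1) = 2*n+1+1 by omega]
        congr 1; push_cast; ring
      rw [heq]
      linear_combination h
    have r5 : ((n : ℂ) + 1) * ((2*(n+1)).choose (n+1) : ℂ)
        = 2*(2*(n:ℂ)+1) * ((2*n).choose n : ℂ) := by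
      have h := Nat.succ_mul_centralBinom_succ n
      simp only [Nat.centralBinom] at h
      exact_mod_cast congrArg (Nat.cast : ℕ → ℂ) h
    set Sn := ∑ k ∈ range (n + 1),
        cchoose (s + k) k * ((2 * n - 2 * k).choose (n - k) : ℂ) * 4 ^ k with hSn
    set Sn1 := ∑ k ∈ range (n + 1 + 1),
        cchoose (s + k) k * ((2 * (n+1) - 2 * k).choose (n + 1 - k) : ℂ) * 4 ^ k with hSn1
    have hF : (((n:ℂ)+1) * (((n:ℂ)+1) * ((2*(n:ℂ)+1) * (2*(n:ℂ)+2)))) ≠ 0 :=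
      mul_ne_zero hn1 (mul_ne_zero hn1 (mul_ne_zero h2n1 h2n2))
    apply mul_left_cancel₀ hF
    linear_combination
        (((n:ℂ)+1) * ((2*(n:ℂ)+1) * (2*(n:ℂ)+2)) * cchoose (((n+1:ℕ):ℂ) + s) (n+1)) * r1
      + ((2*(n:ℂ)+1) * (2*(n:ℂ)+2) * 2*(2*s+2*(n:ℂ)+3) * Sn) * r2
      + ((2*(n:ℂ)+1) * (2*(n:ℂ)+2) * 2*(2*s+2*(n:ℂ)+3) * ((n:ℂ)+s+1)) * IH
      - (((n:ℂ)+1)^2 * (2*(n:ℂ)+1) * ((2*(n+1)).choose (n+1) : ℂ)) * r4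
      - (((n:ℂ)+1)^2 * (2*(n:ℂ)+2*s+3) * ((2*(n+1)).choose (n+1) : ℂ)) * r3
      - (((n:ℂ)+1) * (2*(n:ℂ)+2*s+3) * (2*(n:ℂ)+2*s+2) * cchoose (2*(n:ℂ)+2*s+1) (2*n)) * r5

theorem stmt_16 (n : ℕ) (s : ℂ)
    (hs : ∀ i : ℕ, 1 ≤ i → i ≤ n → s ≠ -(i : ℂ)) :
    ∑ k ∈ range (n + 1), cchoose (s + k) k * ((2 * n - 2 * k).choose (n - k) : ℂ) *
        4 ^ k =
      ((2 * n).choose n : ℂ) * cchoose (2 * n + 2 * s + 1) (2 * n) /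
        cchoose ((n : ℂ) + s) n := by
  rw [eq_div_iff (cchoose_ne_zero n s hs)]
  exact prod_identity s n
end

section
/- For every non-negative integer n, ∑_{k=0}^{n} C(2k,k) · H_{n−k}/4^k = ((2n+1)/4^n) · C(2n,n) · (2·H_{2n+1} − H_n − 2), where C(a,b) denotes the ordinary binomial coefficient. -/
open Finset

/-- The `n`-th harmonic number `H_n = ∑_{j=1}^n 1/j`, with `H_0 = 0`. -/
noncomputable def H (n : ℕ) : ℝ :=
  ∑ j ∈ Finset.range n, 1 / ((j : ℝ) + 1)

noncomputable def cb (k : ℕ) : ℝ := ((2 * k).choose k : ℝ) / 4 ^ k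

lemma cb_succ (k : ℕ) : cb (k + 1) * (2 * (k:ℝ) + 2) = cb k * (2 * k + 1) := by
  have h := Nat.succ_mul_centralBinom_succ k
  rw [Nat.centralBinom, Nat.centralBinom] at h
  have h' : ((k:ℝ)+1) * ((2*(k+1)).choose (k+1) : ℝ) = 2*(2*(k:ℝ)+1) * ((2*k).choose k : ℝ) := by
    exact_mod_cast h
  unfold cb
  rw [pow_succ]
  have h4 : (4:ℝ)^k ≠ 0 := by positivity
  rw [div_mul_eq_mul_div, div_mul_eq_mul_div, div_eq_div_iff (by positivity) h4]
  linear_combination 2*(4:ℝ)^k * h'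

lemma tele (n : ℕ) :
    ∑ k ∈ range n, cb k * ((n:ℝ) + k + 1) / (2 * ((n:ℝ) + 1 - k) * ((n:ℝ) - k)) =
      n * cb n := by
  have key : ∀ k ∈ range n,
      cb k * ((n:ℝ) + k + 1) / (2 * ((n:ℝ) + 1 - k) * ((n:ℝ) - k)) =
        (fun k => cb k * k / ((n:ℝ) + 1 - k)) (k + 1) -
          (fun k => cb k * k / ((n:ℝ) + 1 - k)) k := by
    intro k hk
    rw [mem_range] at hk
    have hk' : (k:ℝ) < n := by exact_mod_cast hk
    have h1 : (n:ℝ) - k ≠ 0 := by intro h; nlinarith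
    have h2 : (n:ℝ) + 1 - k ≠ 0 := by intro h; nlinarith
    have h3 : (n:ℝ) + 1 - (k + 1) = (n:ℝ) - k := by ring
    simp only
    push_cast
    have hc2 : cb (k + 1) = cb k * (2*(k:ℝ)+1) / (2*(k:ℝ)+2) := by
      rw [eq_div_iff (by positivity)]; exact cb_succ k
    rw [hc2, h3]
    field_simp
    ring
  rw [Finset.sum_congr rfl key,
    Finset.sum_range_sub (fun k => cb k * (k:ℝ) / ((n:ℝ) + 1 - k)) n]
  rw [show (n:ℝ) + 1 - n = 1 by ring]
  norm_num
  ring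

noncomputable def A (n : ℕ) : ℝ := ∑ k ∈ range (n + 1), cb k / ((n:ℝ) + 1 - k)

lemma A_rec (n : ℕ) :
    ((n:ℝ) + 2) * A (n + 1) = ((n:ℝ) + 3/2) * A n + cb (n + 1) := by
  have t := tele (n + 1)
  push_cast at t
  have key : ∀ k ∈ range (n + 1),
      ((n:ℝ) + 2) * (cb k / ((n:ℝ) + 1 + 1 - k)) - ((n:ℝ) + 3/2) * (cb k / ((n:ℝ) + 1 - k)) =
        -(cb k * ((n:ℝ) + 1 + k + 1) / (2 * ((n:ℝ) + 1 + 1 - k) * ((n:ℝ) + 1 - k))) := by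
    intro k hk
    rw [mem_range] at hk
    have hk' : (k:ℝ) < n + 1 := by exact_mod_cast hk
    have h1 : (n:ℝ) + 1 - k ≠ 0 := by intro h; nlinarith
    have h3 : (n:ℝ) + 1 + 1 - k ≠ 0 := by intro h; nlinarith
    field_simp
    ring
  have e1 : ∑ k ∈ range (n + 1),
      (((n:ℝ) + 2) * (cb k / ((n:ℝ) + 1 + 1 - k)) - ((n:ℝ) + 3/2) * (cb k / ((n:ℝ) + 1 - k))) =
      -(((n:ℝ) + 1) * cb (n + 1)) := by
    rw [Finset.sum_congr rfl key, Finset.sum_neg_distrib, t]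
  rw [Finset.sum_sub_distrib, ← Finset.mul_sum, ← Finset.mul_sum] at e1
  unfold A
  rw [sum_range_succ]
  push_cast
  rw [show (n:ℝ) + 1 + 1 - ((n:ℝ) + 1) = 1 by ring, div_one]
  linarith [e1]

lemma H_succ (m : ℕ) : H (m + 1) = H m + 1 / ((m:ℝ) + 1) := by
  rw [H, H, sum_range_succ]

lemma A_closed (n : ℕ) : A n = cb (n + 1) * (2 * H (2 * n + 1) - H n) := by
  induction n with
  | zero => norm_num [A, cb, H, sum_range_succ]
  | succ n ih =>
    have hr := A_rec n
    have hcb : cb (n + 2) = cb (n + 1) * (2 * (n:ℝ) + 3) / (2 * (n:ℝ) + 4) := by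
      rw [eq_div_iff (by positivity)]
      have h := cb_succ (n + 1); push_cast at h; linear_combination h
    have hH1 : H (2 * (n + 1) + 1) = H (2 * n + 1) + 1 / (2 * (n:ℝ) + 2) + 1 / (2 * (n:ℝ) + 3) := by
      rw [show 2 * (n + 1) + 1 = (2 * n + 1) + 1 + 1 by ring, H_succ, H_succ]
      push_cast; ring
    have hn2 : ((n:ℝ) + 2) ≠ 0 := by positivity
    apply mul_left_cancel₀ hn2
    rw [hr, ih, show n + 1 + 1 = n + 2 from rfl, hcb, hH1, H_succ n]
    have d1 : (2 * (n:ℝ) + 2) ≠ 0 := by positivity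
    have d2 : (2 * (n:ℝ) + 3) ≠ 0 := by positivity
    have d3 : (2 * (n:ℝ) + 4) ≠ 0 := by positivity
    have d4 : ((n:ℝ) + 1) ≠ 0 := by positivity
    push_cast
    field_simp
    ring

lemma main_id (m : ℕ) :
    ∑ k ∈ range (m + 1), cb k * H (m - k) =
      (2 * (m:ℝ) + 1) * cb m * (2 * H (2 * m + 1) - H m - 2) := by
  induction m with
  | zero => norm_num [cb, H, sum_range_succ]
  | succ m ih =>
    have hstep : ∀ k ∈ range (m + 1),
        cb k * H (m + 1 - k) = cb k * H (m - k) + cb k / ((m:ℝ) + 1 - k) := by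
      intro k hk
      rw [mem_range] at hk
      have hkm : k ≤ m := by omega
      have h1 : m + 1 - k = (m - k) + 1 := by omega
      have h2 : ((m - k : ℕ) : ℝ) = (m:ℝ) - k := by
        push_cast [hkm]; ring
      rw [h1, H_succ, h2]
      ring
    rw [sum_range_succ, Finset.sum_congr rfl hstep, Finset.sum_add_distrib]
    have hA : ∑ k ∈ range (m + 1), cb k / ((m:ℝ) + 1 - k) = cb (m + 1) * (2 * H (2 * m + 1) - H m) :=
      A_closed m
    rw [ih, hA, show m + 1 - (m + 1) = 0 by omega, show H 0 = 0 by simp [H]]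
    have hcb : cb (m + 1) = cb m * (2 * (m:ℝ) + 1) / (2 * (m:ℝ) + 2) := by
      rw [eq_div_iff (by positivity)]; exact cb_succ m
    have hH1 : H (2 * (m + 1) + 1) = H (2 * m + 1) + 1 / (2 * (m:ℝ) + 2) + 1 / (2 * (m:ℝ) + 3) := by
      rw [show 2 * (m + 1) + 1 = (2 * m + 1) + 1 + 1 by ring, H_succ, H_succ]
      push_cast; ring
    rw [hH1, H_succ m, hcb]
    have d1 : (2 * (m:ℝ) + 2) ≠ 0 := by positivity
    have d2 : (2 * (m:ℝ) + 3) ≠ 0 := by positivity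
    have d4 : ((m:ℝ) + 1) ≠ 0 := by positivity
    push_cast
    field_simp
    ring

theorem stmt_17 (n : ℕ) :
    ∑ k ∈ range (n + 1), ((2 * k).choose k : ℝ) * H (n - k) / 4 ^ k =
      ((2 * (n : ℝ) + 1) / 4 ^ n) * ((2 * n).choose n : ℝ) *
        (2 * H (2 * n + 1) - H n - 2) := by
  have e : ∑ k ∈ range (n + 1), ((2 * k).choose k : ℝ) * H (n - k) / 4 ^ k =
      ∑ k ∈ range (n + 1), cb k * H (n - k) := by
    apply Finset.sum_congr rfl
    intro k _
    unfold cb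
    ring
  rw [e, main_id n]
  unfold cb
  ring
end

section
/- For every non-negative integer n, ∑_{k=0}^{n} C(n,k)² · (H_k² + H_k^{(2)}) = C(2n,n) · ((H_{2n} − 2H_n)² + 2·H_n^{(2)} − H_{2n}^{(2)}), where C(a,b) denotes the ordinary binomial coefficient. -/
open Finset

/-- The `n`-th generalized harmonic number of order 2, `H_n^{(2)} = ∑_{j=1}^n 1/j²`. -/
noncomputable def H2 (n : ℕ) : ℝ :=
  ∑ j ∈ Finset.range n, 1 / ((j : ℝ) + 1) ^ 2


open Polynomial


lemma eval_deriv_prod (s : Finset ℕ) (a : ℕ → ℝ) (t : ℝ) (h : ∀ i ∈ s, t - a i ≠ 0) :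
    (derivative (∏ i ∈ s, (X - C (a i)))).eval t
      = (∏ i ∈ s, (t - a i)) * ∑ i ∈ s, (t - a i)⁻¹ := by
  induction s using Finset.induction with
  | empty => simp
  | @insert j s hj ih =>
    have hji := h j (mem_insert_self _ _)
    have hs : ∀ i ∈ s, t - a i ≠ 0 := fun i hi => h i (mem_insert_of_mem hi)
    rw [prod_insert hj, derivative_mul]
    simp only [derivative_sub, derivative_X, derivative_C, sub_zero, one_mul, eval_add, eval_mul,
      eval_sub, eval_X, eval_C, eval_prod, ih hs, prod_insert hj, sum_insert hj]
    field_simp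

lemma eval_deriv2_prod (s : Finset ℕ) (a : ℕ → ℝ) (t : ℝ) (h : ∀ i ∈ s, t - a i ≠ 0) :
    (derivative (derivative (∏ i ∈ s, (X - C (a i))))).eval t
      = (∏ i ∈ s, (t - a i)) *
        ((∑ i ∈ s, (t - a i)⁻¹) ^ 2 - ∑ i ∈ s, ((t - a i)⁻¹) ^ 2) := by
  induction s using Finset.induction with
  | empty => simp
  | @insert j s hj ih =>
    have hji := h j (mem_insert_self _ _)
    have hs : ∀ i ∈ s, t - a i ≠ 0 := fun i hi => h i (mem_insert_of_mem hi)
    rw [prod_insert hj]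
    simp only [derivative_mul, derivative_add, derivative_sub, derivative_X, derivative_C,
      sub_zero, one_mul, zero_mul, add_zero, zero_add, eval_add, eval_mul,
      eval_sub, eval_X, eval_C, eval_prod, ih hs, eval_deriv_prod s a t hs,
      prod_insert hj, sum_insert hj]
    field_simp
    ring





lemma Hsub (N k : ℕ) (h : k ≤ N) :
    ∑ i ∈ Finset.range k, ((N : ℝ) - i)⁻¹ = H N - H (N - k) := by
  induction k with
  | zero => simp
  | succ k ih =>
    have hk : k ≤ N := Nat.le_of_succ_le h
    rw [sum_range_succ, ih hk]
    have h1 : N - k = (N - (k+1)) + 1 := by omega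
    have h2 : ((N - (k+1) : ℕ) : ℝ) + 1 = (N : ℝ) - k := by
      have : ((N - (k+1) : ℕ) : ℝ) = (N : ℝ) - (k + 1) := by
        push_cast [Nat.cast_sub h]; ring
      rw [this]; ring
    rw [h1]
    unfold H
    rw [sum_range_succ, h2]
    rw [one_div]
    ring

lemma H2sub (N k : ℕ) (h : k ≤ N) :
    ∑ i ∈ Finset.range k, (((N : ℝ) - i)⁻¹) ^ 2 = H2 N - H2 (N - k) := by
  induction k with
  | zero => simp
  | succ k ih =>
    have hk : k ≤ N := Nat.le_of_succ_le h
    rw [sum_range_succ, ih hk]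
    have h1 : N - k = (N - (k+1)) + 1 := by omega
    have h2 : ((N - (k+1) : ℕ) : ℝ) + 1 = (N : ℝ) - k := by
      have : ((N - (k+1) : ℕ) : ℝ) = (N : ℝ) - (k + 1) := by
        push_cast [Nat.cast_sub h]; ring
      rw [this]; ring
    rw [h1]
    unfold H2
    rw [sum_range_succ, h2, one_div, ← inv_pow]
    ring


lemma descProd (m k : ℕ) : ∏ i ∈ Finset.range k, ((m : ℝ) - i) = (m.descFactorial k : ℝ) := by
  induction k with
  | zero => simp
  | succ k ih =>
    rw [prod_range_succ, ih, Nat.descFactorial_succ, Nat.cast_mul]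
    rcases le_or_gt k m with h | h
    · rw [Nat.cast_sub h]; ring
    · rw [Nat.descFactorial_eq_zero_iff_lt.2 h]; simp

lemma descChoose (m k : ℕ) : (m.descFactorial k : ℝ) = (k.factorial : ℝ) * m.choose k := by
  exact_mod_cast congrArg (Nat.cast (R := ℝ)) (Nat.descFactorial_eq_factorial_mul_choose m k)

noncomputable def Pp (n : ℕ) : Polynomial ℝ :=
  ∑ k ∈ Finset.range (n+1),
    C ((n.choose (n-k) : ℝ) / k.factorial) * ∏ i ∈ Finset.range k, (X - C (i : ℝ))

noncomputable def Qp (n : ℕ) : Polynomial ℝ :=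
  C ((n.factorial : ℝ)⁻¹) * ∏ i ∈ Finset.range n, (X - C ((i : ℝ) - n))

lemma PQ (n : ℕ) : Pp n = Qp n := by
  apply Polynomial.eq_of_infinite_eval_eq
  refine Set.Infinite.mono ?_ (Set.infinite_range_of_injective Nat.cast_injective)
  · rintro x ⟨m, rfl⟩
    show eval _ (Pp n) = eval _ (Qp n)
    have hP : eval (m : ℝ) (Pp n)
        = ∑ k ∈ Finset.range (n+1), (m.choose k : ℝ) * (n.choose (n-k) : ℝ) := by
      unfold Pp
      rw [eval_finset_sum]
      refine Finset.sum_congr rfl fun k _ => ?_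
      rw [eval_mul, eval_C, eval_prod]
      simp only [eval_sub, eval_X, eval_C]
      rw [descProd, descChoose]
      have : (k.factorial : ℝ) ≠ 0 := by positivity
      field_simp
    have hQ : eval (m : ℝ) (Qp n) = ((m + n).choose n : ℝ) := by
      unfold Qp
      rw [eval_mul, eval_C, eval_prod]
      simp only [eval_sub, eval_X, eval_C]
      have : ∏ i ∈ Finset.range n, ((m : ℝ) - ((i : ℝ) - n))
          = ∏ i ∈ Finset.range n, (((m + n : ℕ) : ℝ) - i) := by
        refine Finset.prod_congr rfl fun i _ => ?_
        push_cast; ring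
      rw [this, descProd, descChoose]
      have : (n.factorial : ℝ) ≠ 0 := by positivity
      field_simp
    rw [hP, hQ]
    have hV : ((m + n).choose n : ℕ) = ∑ k ∈ Finset.range (n+1), m.choose k * n.choose (n-k) := by
      rw [Nat.add_choose_eq, Finset.Nat.sum_antidiagonal_eq_sum_range_succ_mk]
    rw [hV]
    push_cast
    ring


lemma Pne (n k : ℕ) (hk : k ≤ n) : ∀ i ∈ Finset.range k, (n : ℝ) - (i : ℝ) ≠ 0 := by
  intro i hi
  have : i < n := lt_of_lt_of_le (Finset.mem_range.1 hi) hk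
  have : (i : ℝ) < n := by exact_mod_cast this
  linarith

lemma Qne (n : ℕ) : ∀ i ∈ Finset.range n, (n : ℝ) - ((i : ℝ) - n) ≠ 0 := by
  intro i hi
  have : i < n := Finset.mem_range.1 hi
  have : (i : ℝ) < n := by exact_mod_cast this
  have h0 : (0:ℝ) ≤ n := Nat.cast_nonneg n
  intro h; nlinarith

lemma eval_Pp0 (n : ℕ) : eval (n : ℝ) (Pp n)
    = ∑ k ∈ Finset.range (n+1), (n.choose k : ℝ) * (n.choose (n-k) : ℝ) := by
  unfold Pp
  rw [eval_finset_sum]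
  refine Finset.sum_congr rfl fun k hk => ?_
  rw [eval_mul, eval_C, eval_prod]
  simp only [eval_sub, eval_X, eval_C]
  rw [descProd, descChoose]
  have : (k.factorial : ℝ) ≠ 0 := by positivity
  field_simp

lemma eval_Pp1 (n : ℕ) : eval (n : ℝ) (derivative (Pp n))
    = ∑ k ∈ Finset.range (n+1),
        (n.choose k : ℝ) * (n.choose (n-k) : ℝ) * (H n - H (n-k)) := by
  unfold Pp
  rw [derivative_sum, eval_finset_sum]
  refine Finset.sum_congr rfl fun k hk => ?_
  have hk' : k ≤ n := Nat.lt_succ_iff.1 (Finset.mem_range.1 hk)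
  rw [derivative_C_mul, eval_mul, eval_C,
    eval_deriv_prod (Finset.range k) (fun i => (i : ℝ)) _ (Pne n k hk'),
    descProd, descChoose, Hsub n k hk']
  have : (k.factorial : ℝ) ≠ 0 := by positivity
  field_simp

lemma eval_Pp2 (n : ℕ) : eval (n : ℝ) (derivative (derivative (Pp n)))
    = ∑ k ∈ Finset.range (n+1),
        (n.choose k : ℝ) * (n.choose (n-k) : ℝ)
          * ((H n - H (n-k)) ^ 2 - (H2 n - H2 (n-k))) := by
  unfold Pp
  rw [derivative_sum, derivative_sum, eval_finset_sum]
  refine Finset.sum_congr rfl fun k hk => ?_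
  have hk' : k ≤ n := Nat.lt_succ_iff.1 (Finset.mem_range.1 hk)
  rw [derivative_C_mul, derivative_C_mul, eval_mul, eval_C,
    eval_deriv2_prod (Finset.range k) (fun i => (i : ℝ)) _ (Pne n k hk'),
    descProd, descChoose, Hsub n k hk', H2sub n k hk']
  have : (k.factorial : ℝ) ≠ 0 := by positivity
  field_simp

lemma twoCast (n : ℕ) (i : ℕ) : (n : ℝ) - ((i : ℝ) - n) = ((2*n : ℕ) : ℝ) - i := by
  push_cast; ring

lemma eval_Qp0 (n : ℕ) : eval (n : ℝ) (Qp n) = ((2*n).choose n : ℝ) := by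
  unfold Qp
  rw [eval_mul, eval_C, eval_prod]
  simp only [eval_sub, eval_X, eval_C]
  rw [Finset.prod_congr rfl fun i _ => twoCast n i, descProd, descChoose]
  have : (n.factorial : ℝ) ≠ 0 := by positivity
  field_simp

lemma eval_Qp1 (n : ℕ) : eval (n : ℝ) (derivative (Qp n))
    = ((2*n).choose n : ℝ) * (H (2*n) - H n) := by
  unfold Qp
  rw [derivative_C_mul, eval_mul, eval_C,
    eval_deriv_prod (Finset.range n) (fun i => (i : ℝ) - n) _ (Qne n)]
  rw [Finset.prod_congr rfl fun i _ => twoCast n i,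
    Finset.sum_congr rfl fun i _ => congrArg Inv.inv (twoCast n i),
    descProd, descChoose, Hsub (2*n) n (by omega)]
  have h : 2*n - n = n := by omega
  rw [h]
  have : (n.factorial : ℝ) ≠ 0 := by positivity
  field_simp

lemma eval_Qp2 (n : ℕ) : eval (n : ℝ) (derivative (derivative (Qp n)))
    = ((2*n).choose n : ℝ) * ((H (2*n) - H n) ^ 2 - (H2 (2*n) - H2 n)) := by
  unfold Qp
  rw [derivative_C_mul, derivative_C_mul, eval_mul, eval_C,
    eval_deriv2_prod (Finset.range n) (fun i => (i : ℝ) - n) _ (Qne n)]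
  rw [Finset.prod_congr rfl fun i _ => twoCast n i,
    Finset.sum_congr rfl fun i _ => congrArg Inv.inv (twoCast n i),
    Finset.sum_congr rfl fun i _ => congrArg (fun x => (Inv.inv x)^2) (twoCast n i),
    descProd, descChoose, Hsub (2*n) n (by omega), H2sub (2*n) n (by omega)]
  have h : 2*n - n = n := by omega
  rw [h]
  have : (n.factorial : ℝ) ≠ 0 := by positivity
  field_simp

theorem stmt_19 (n : ℕ) :
    ∑ k ∈ range (n + 1), (n.choose k : ℝ) ^ 2 * (H k ^ 2 + H2 k) =
      ((2 * n).choose n : ℝ) *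
        ((H (2 * n) - 2 * H n) ^ 2 + 2 * H2 n - H2 (2 * n)) := by
  have e0 : ∑ k ∈ Finset.range (n+1), (n.choose k : ℝ) * (n.choose (n-k) : ℝ)
      = ((2*n).choose n : ℝ) := by
    have h := congrArg (eval (n : ℝ)) (PQ n)
    rwa [eval_Pp0, eval_Qp0] at h
  have e1 : ∑ k ∈ Finset.range (n+1),
      (n.choose k : ℝ) * (n.choose (n-k) : ℝ) * (H n - H (n-k))
      = ((2*n).choose n : ℝ) * (H (2*n) - H n) := by
    have h := congrArg (eval (n : ℝ)) (congrArg derivative (PQ n))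
    rwa [eval_Pp1, eval_Qp1] at h
  have e2 : ∑ k ∈ Finset.range (n+1),
      (n.choose k : ℝ) * (n.choose (n-k) : ℝ)
        * ((H n - H (n-k)) ^ 2 - (H2 n - H2 (n-k)))
      = ((2*n).choose n : ℝ) * ((H (2*n) - H n) ^ 2 - (H2 (2*n) - H2 n)) := by
    have h := congrArg (eval (n : ℝ)) (congrArg derivative (congrArg derivative (PQ n)))
    rwa [eval_Pp2, eval_Qp2] at h
  have refl : ∀ g : ℕ → ℝ,
      ∑ k ∈ Finset.range (n+1), (n.choose k : ℝ) * (n.choose (n-k) : ℝ) * g (n-k)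
        = ∑ k ∈ Finset.range (n+1), ((n.choose k : ℝ)) ^ 2 * g k := by
    intro g
    rw [← Finset.sum_range_reflect (fun k => ((n.choose k : ℝ)) ^ 2 * g k) (n+1)]
    refine Finset.sum_congr rfl fun k hk => ?_
    have hk' : k ≤ n := Nat.lt_succ_iff.1 (Finset.mem_range.1 hk)
    have h1 : n + 1 - 1 - k = n - k := by omega
    rw [h1, ← Nat.choose_symm hk']
    ring
  have s0 : ∑ k ∈ Finset.range (n+1), (n.choose k : ℝ) ^ 2 = ((2*n).choose n : ℝ) := by
    have h := refl (fun _ => (1:ℝ))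
    simp only [mul_one] at h
    rw [← h]; exact e0
  have s1 : ∑ k ∈ Finset.range (n+1), (n.choose k : ℝ) ^ 2 * (H n - H k)
      = ((2*n).choose n : ℝ) * (H (2*n) - H n) := by
    rw [← refl (fun m => H n - H m)]; exact e1
  have s2 : ∑ k ∈ Finset.range (n+1),
      (n.choose k : ℝ) ^ 2 * ((H n - H k) ^ 2 - (H2 n - H2 k))
      = ((2*n).choose n : ℝ) * ((H (2*n) - H n) ^ 2 - (H2 (2*n) - H2 n)) := by
    rw [← refl (fun m => (H n - H m) ^ 2 - (H2 n - H2 m))]; exact e2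
  have expand : ∑ k ∈ range (n + 1), (n.choose k : ℝ) ^ 2 * (H k ^ 2 + H2 k)
      = (∑ k ∈ Finset.range (n+1),
          (n.choose k : ℝ) ^ 2 * ((H n - H k) ^ 2 - (H2 n - H2 k)))
        + H n ^ 2 * (∑ k ∈ Finset.range (n+1), (n.choose k : ℝ) ^ 2)
        - 2 * H n * (∑ k ∈ Finset.range (n+1), (n.choose k : ℝ) ^ 2 * (H n - H k))
        + H2 n * (∑ k ∈ Finset.range (n+1), (n.choose k : ℝ) ^ 2) := by
    rw [Finset.mul_sum, Finset.mul_sum, Finset.mul_sum,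
      ← Finset.sum_add_distrib, ← Finset.sum_sub_distrib, ← Finset.sum_add_distrib]
    exact Finset.sum_congr rfl fun k _ => by ring
  rw [expand, s0, s1, s2]
  ring
end
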